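/- Let F be a field of characteristic 0 and consider the Lie algebra B with basis {x^α : α ∈ Γ} for an additive subgroup Γ ⊆ F^2 (write α = (α_0, α_1)), with bracket [x^α, x^β] = ((2-α_1)β_0 - α_0(2-β_1))·x^{α+β}. Then this bracket satisfies the Jacobi identity, so B is a Lie algebra. -/

import Mathlib

/-- The bracket [x^α,x^β] = ((2-α₁)β₀ - α₀(2-β₁))x^{α+β} on F[Γ],
Γ ≤ F², satisfies alternativity and the Jacobi identity. -/
theorem stmt11 {F : Type*} [Field F] [CharZero F]
    (Γ : AddSubgroup (F × F))
    (b : (Γ →₀ F) →ₗ[F] (Γ →₀ F) →ₗ[F] (Γ →₀ F))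
    (hb : ∀ α β : Γ, b (Finsupp.single α 1) (Finsupp.single β 1) =
      ((2 - (α : F × F).2) * (β : F × F).1 - (α : F × F).1 * (2 - (β : F × F).2)) •
        Finsupp.single (α + β) 1) :
    (∀ u : Γ →₀ F, b u u = 0) ∧
    (∀ u v w : Γ →₀ F, b (b u v) w + b (b v w) u + b (b w u) v = 0) := by
  have hs : ∀ (α β : Γ) (c d : F),
      b (Finsupp.single α c) (Finsupp.single β d) =
      (c * d * ((2 - (α : F × F).2) * (β : F × F).1 -
        (α : F × F).1 * (2 - (β : F × F).2))) • Finsupp.single (α + β) 1 := by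
    intro α β c d
    have h1 : Finsupp.single α c = c • Finsupp.single α (1:F) := by
      rw [Finsupp.smul_single, smul_eq_mul, mul_one]
    have h2 : Finsupp.single β d = d • Finsupp.single β (1:F) := by
      rw [Finsupp.smul_single, smul_eq_mul, mul_one]
    rw [h1, h2]
    simp only [map_smul, LinearMap.smul_apply, hb, smul_smul]
    congr 1
    ring
  have hanti : ∀ u v : Γ →₀ F, b u v = - b v u := by
    intro u v
    induction u using Finsupp.induction_linear with
    | zero => simp
    | add f g hf hg => rw [map_add, LinearMap.add_apply, hf, hg, map_add]; abel
    | single a c =>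
      induction v using Finsupp.induction_linear with
      | zero => simp
      | add f g hf hg =>
          rw [map_add, hf, hg, map_add, LinearMap.add_apply]
          abel
      | single a' c' =>
          rw [hs, hs, add_comm a' a, ← neg_smul]
          congr 1
          ring
  constructor
  · intro u
    have h := hanti u u
    have h2 : (2 : F) • b u u = 0 := by
      rw [two_smul]
      nth_rewrite 2 [h]
      simp
    rcases smul_eq_zero.mp h2 with h3 | h3
    · exact absurd h3 two_ne_zero
    · exact h3
  · have key : ∀ a b c d e f : (Γ →₀ F), a + c + e = 0 → b + d + f = 0 →
        a + b + (c + d) + (e + f) = 0 := by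
      intro a b c d e f h1 h2
      have : a + b + (c + d) + (e + f) = (a + c + e) + (b + d + f) := by abel
      rw [this, h1, h2, add_zero]
    intro u v w
    induction u using Finsupp.induction_linear with
    | zero => simp
    | add f g hf hg =>
        simp only [map_add, LinearMap.add_apply]
        exact key _ _ _ _ _ _ hf hg
    | single a c =>
    induction v using Finsupp.induction_linear with
    | zero => simp
    | add f g hf hg =>
        simp only [map_add, LinearMap.add_apply]
        exact key _ _ _ _ _ _ hf hg
    | single a' c' =>
    induction w using Finsupp.induction_linear with
    | zero => simp
    | add f g hf hg =>
        simp only [map_add, LinearMap.add_apply]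
        exact key _ _ _ _ _ _ hf hg
    | single a'' c'' =>
      rw [hs, map_smul, LinearMap.smul_apply, hs,
          hs, map_smul, LinearMap.smul_apply, hs,
          hs, map_smul, LinearMap.smul_apply, hs]
      rw [show a' + a'' + a = a + a' + a'' from by abel,
          show a'' + a + a' = a + a' + a'' from by abel]
      rw [smul_smul, smul_smul, smul_smul, ← add_smul, ← add_smul]
      convert zero_smul F _
      push_cast
      simp only [Prod.fst_add, Prod.snd_add]
      ring
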